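/- Suppose Alice prepares a qubit in a basis state of one of three pairwise mutually unbiased bases of ℂ², with arbitrary prior probability distributions {p_i^(m)} on the two basis states of each basis, and Bob measures with an arbitrary POVM. Writing p_1^(m) = max_i p_i^(m) for the larger prior probability in the m-th basis, the mutual information satisfies I_1/(2 p_1^(1)) + I_2/(2 p_1^(2)) + I_3/(2 p_1^(3)) ≤ 1. -/

import Mathlib

open scoped BigOperators ComplexOrder
open Matrix

noncomputable section

/-- Shannon entropy (in bits) of a finitely-indexed probability vector. -/
def shannonEntropy {ι : Type*} [Fintype ι] (q : ι → ℝ) : ℝ :=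
  -∑ i, q i * Real.logb 2 (q i)

/-- Born probability ⟨v|M|v⟩ of POVM element `M` on the (unit vector) state `v`. -/
def outProb {d : ℕ} (M : Matrix (Fin d) (Fin d) ℂ) (v : Fin d → ℂ) : ℝ :=
  (star v ⬝ᵥ M.mulVec v).re

/-- A finite family of matrices is a POVM if each member is positive semidefinite
and they sum to the identity. -/
def IsPOVM {d : ℕ} {S : Type*} [Fintype S] (E : S → Matrix (Fin d) (Fin d) ℂ) : Prop :=
  (∀ s, (E s).PosSemidef) ∧ ∑ s, E s = 1

/-- `B` lists the vectors of an orthonormal basis of ℂ^d. -/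
def IsONB {d : ℕ} (B : Fin d → Fin d → ℂ) : Prop :=
  ∀ i j, star (B i) ⬝ᵥ B j = if i = j then 1 else 0

/-- Two bases of ℂ^d are mutually unbiased: all squared overlaps equal 1/d. -/
def AreMUB {d : ℕ} (B C : Fin d → Fin d → ℂ) : Prop :=
  ∀ i j, ‖star (B i) ⬝ᵥ C j‖ ^ 2 = 1 / d

/-- Mutual information (in bits) between Alice's input `i` (prior `p i`, state `B i`)
and Bob's POVM outcome `s`:  `I = H({p i}) - ∑ s p(s) H({p_{i|s}})`. -/
def mutInfo {d : ℕ} {S : Type*} [Fintype S] (B : Fin d → Fin d → ℂ) (p : Fin d → ℝ)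
    (E : S → Matrix (Fin d) (Fin d) ℂ) : ℝ :=
  shannonEntropy p -
    ∑ s, (∑ i, p i * outProb (E s) (B i)) *
      shannonEntropy (fun i =>
        p i * outProb (E s) (B i) / ∑ j, p j * outProb (E s) (B j))


private lemma outProb_nonneg {S : Type*} (M : Matrix (Fin 2) (Fin 2) ℂ)
    (h : M.PosSemidef) (v : Fin 2 → ℂ) : 0 ≤ outProb M v := by
  have h2 := h.dotProduct_mulVec_nonneg v
  rw [Complex.le_def] at h2
  simpa [outProb] using h2.1

private lemma sum_outProb_povm {S : Type*} [Fintype S] (E : S → Matrix (Fin 2) (Fin 2) ℂ)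
    (hEsum : ∑ s, E s = 1) (v : Fin 2 → ℂ) (hv : star v ⬝ᵥ v = 1) :
    ∑ s, outProb (E s) v = 1 := by
  classical
  have hlin : ∑ s, (star v ⬝ᵥ (E s).mulVec v) = star v ⬝ᵥ (∑ s, E s).mulVec v := by
    let f : Matrix (Fin 2) (Fin 2) ℂ →+ ℂ :=
      AddMonoidHom.mk' (fun A => star v ⬝ᵥ A.mulVec v)
        (fun A B => by
          show star v ⬝ᵥ (A + B).mulVec v = star v ⬝ᵥ A.mulVec v + star v ⬝ᵥ B.mulVec v
          rw [Matrix.add_mulVec, dotProduct_add])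
    exact (map_sum f E Finset.univ).symm
  have : ∑ s, (star v ⬝ᵥ (E s).mulVec v) = 1 := by
    rw [hlin, hEsum, Matrix.one_mulVec, hv]
  calc ∑ s, outProb (E s) v = (∑ s, (star v ⬝ᵥ (E s).mulVec v)).re := by
        rw [Complex.re_sum]
        rfl
    _ = 1 := by rw [this]; rfl

private def PHI : ℝ → ℝ := fun x => 2*Real.log 2*x^2 - (1+x)*Real.log (1+x) - (1-x)*Real.log (1-x)
private def PSI : ℝ → ℝ := fun x => 4*Real.log 2*x - Real.log (1+x) + Real.log (1-x)

private lemma hasDerivAt_PHI {x : ℝ} (hx : x ∈ Set.Ioo (-1:ℝ) 1) : HasDerivAt PHI (PSI x) x := by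
  obtain ⟨h1, h2⟩ := hx
  have h1x : (0:ℝ) < 1 + x := by linarith
  have h2x : (0:ℝ) < 1 - x := by linarith
  have ha : HasDerivAt (fun x : ℝ => 1 + x) 1 x := by
    simpa using (hasDerivAt_id x).const_add 1
  have hb : HasDerivAt (fun x : ℝ => 1 - x) (-1) x := by
    exact (hasDerivAt_id' x).const_sub 1
  have hla : HasDerivAt (fun x : ℝ => Real.log (1 + x)) (1/(1+x)) x := by
    exact ha.log h1x.ne'
  have hlb : HasDerivAt (fun x : ℝ => Real.log (1 - x)) (-(1/(1-x))) x := by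
    have := hb.log h2x.ne'
    rwa [neg_div] at this
  have hA : HasDerivAt (fun x : ℝ => (1+x)*Real.log (1+x)) (Real.log (1+x) + 1) x := by
    have := ha.mul hla
    refine this.congr_deriv ?_
    field_simp
  have hB : HasDerivAt (fun x : ℝ => (1-x)*Real.log (1-x)) (-Real.log (1-x) - 1) x := by
    have := hb.mul hlb
    refine this.congr_deriv ?_
    field_simp
    ring
  have hsq : HasDerivAt (fun x : ℝ => 2*Real.log 2*x^2) (2*Real.log 2*(2*x)) x := by
    simpa using ((hasDerivAt_pow 2 x).const_mul (2*Real.log 2))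
  have := (hsq.sub hA).sub hB
  refine this.congr_deriv ?_
  simp only [PSI]
  ring

private lemma hasDerivAt_PSI {x : ℝ} (hx : x ∈ Set.Ioo (-1:ℝ) 1) :
    HasDerivAt PSI (4*Real.log 2 - 1/(1+x) - 1/(1-x)) x := by
  obtain ⟨h1, h2⟩ := hx
  have h1x : (0:ℝ) < 1 + x := by linarith
  have h2x : (0:ℝ) < 1 - x := by linarith
  have ha : HasDerivAt (fun x : ℝ => 1 + x) 1 x := by
    simpa using (hasDerivAt_id x).const_add 1
  have hb : HasDerivAt (fun x : ℝ => 1 - x) (-1) x := by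
    exact (hasDerivAt_id' x).const_sub 1
  have hla : HasDerivAt (fun x : ℝ => Real.log (1 + x)) (1/(1+x)) x := by
    exact ha.log h1x.ne'
  have hlb : HasDerivAt (fun x : ℝ => Real.log (1 - x)) (-(1/(1-x))) x := by
    have := hb.log h2x.ne'
    rwa [neg_div] at this
  have hlin : HasDerivAt (fun x : ℝ => 4*Real.log 2*x) (4*Real.log 2) x := by
    simpa using (hasDerivAt_id x).const_mul (4*Real.log 2)
  have := (hlin.sub hla).add hlb
  refine this.congr_deriv ?_
  ring

private lemma log2_half : (1:ℝ)/2 < Real.log 2 := by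
  have := Real.log_two_gt_d9; linarith

private lemma PHI_zero : PHI 0 = 0 := by simp [PHI]

private lemma PHI_one : PHI 1 = 0 := by
  have : (1:ℝ) - 1 = 0 := by ring
  simp [PHI, this, Real.log_zero]
  ring

private lemma PHI_even (x : ℝ) : PHI (-x) = PHI x := by
  simp only [PHI]
  have e1 : 1 + -x = 1 - x := by ring
  have e2 : 1 - -x = 1 + x := by ring
  rw [e1, e2]; ring

private lemma core_nonneg : ∀ x ∈ Set.Icc (-1:ℝ) 1, 0 ≤ PHI x := by
  set l2 := Real.log 2 with hl2
  have hl2pos : (0:ℝ) < l2 := by have := log2_half; linarith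
  set s : ℝ := Real.sqrt (1 - 1/(2*l2)) with hsdef
  have hcore : 0 < 1 - 1/(2*l2) := by
    have h1 : 1/(2*l2) < 1 := by
      rw [div_lt_one (by linarith)]
      have := log2_half; linarith
    linarith
  have hs_sq : s^2 = 1 - 1/(2*l2) := Real.sq_sqrt hcore.le
  have hs_pos : 0 < s := Real.sqrt_pos.mpr hcore
  have hs_lt1 : s < 1 := by
    rw [hsdef]
    have h0 : 0 < 1/(2*l2) := by positivity
    have : 1 - 1/(2*l2) < 1 := by linarith
    calc Real.sqrt (1 - 1/(2*l2)) < Real.sqrt 1 := by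
          apply Real.sqrt_lt_sqrt hcore.le this
      _ = 1 := Real.sqrt_one
  -- continuity of PHI
  have hPHIcont : Continuous PHI := by
    have h1 : Continuous fun x : ℝ => (1+x) * Real.log (1+x) :=
      Real.continuous_mul_log.comp (continuous_const.add continuous_id)
    have h2 : Continuous fun x : ℝ => (1-x) * Real.log (1-x) :=
      Real.continuous_mul_log.comp (continuous_const.sub continuous_id)
    exact ((continuous_const.mul (continuous_pow 2)).sub h1).sub h2
  -- Step A : PSI ≥ 0 on [0, s]
  have hsubIoo : Set.Icc (0:ℝ) s ⊆ Set.Ioo (-1:ℝ) 1 := by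
    intro y hy; exact ⟨by linarith [hy.1], lt_of_le_of_lt hy.2 hs_lt1⟩
  have hPSImono : MonotoneOn PSI (Set.Icc 0 s) := by
    apply monotoneOn_of_deriv_nonneg (convex_Icc 0 s)
    · intro y hy
      exact (hasDerivAt_PSI (hsubIoo hy)).continuousAt.continuousWithinAt
    · intro y hy
      rw [interior_Icc] at hy
      exact (hasDerivAt_PSI (hsubIoo (Set.Ioo_subset_Icc_self hy))).differentiableAt.differentiableWithinAt
    · intro y hy
      rw [interior_Icc] at hy
      have hmem := hsubIoo (Set.Ioo_subset_Icc_self hy)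
      rw [(hasDerivAt_PSI hmem).deriv]
      have h1y : (0:ℝ) < 1 + y := by linarith [hmem.1]
      have h2y : (0:ℝ) < 1 - y := by linarith [hmem.2]
      have hy2 : y^2 ≤ s^2 := by nlinarith [hy.1.le, hy.2.le]
      have hlow : 1/(2*l2) ≤ 1 - y^2 := by rw [hs_sq] at hy2; linarith
      have hpos2 : (0:ℝ) < 1 - y^2 := by nlinarith
      have hsum : 1/(1+y) + 1/(1-y) = 2/(1-y^2) := by
        field_simp; ring
      have : 2/(1-y^2) ≤ 4*l2 := by
        rw [div_le_iff₀ hpos2]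
        calc (2:ℝ) = 4*l2 * (1/(2*l2)) := by field_simp; ring
          _ ≤ 4*l2*(1-y^2) := by
              apply mul_le_mul_of_nonneg_left hlow (by linarith)
      linarith [hsum]
  have hPSI0 : PSI 0 = 0 := by simp [PSI]
  have hPSInonneg : ∀ y ∈ Set.Icc (0:ℝ) s, 0 ≤ PSI y := by
    intro y hy
    have := hPSImono (Set.left_mem_Icc.mpr hs_pos.le) hy hy.1
    rwa [hPSI0] at this
  -- Step B : PHI ≥ 0 on [0, s]
  have hPHImono : MonotoneOn PHI (Set.Icc 0 s) := by
    apply monotoneOn_of_deriv_nonneg (convex_Icc 0 s) (hPHIcont.continuousOn)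
    · intro y hy
      rw [interior_Icc] at hy
      exact (hasDerivAt_PHI (hsubIoo (Set.Ioo_subset_Icc_self hy))).differentiableAt.differentiableWithinAt
    · intro y hy
      rw [interior_Icc] at hy
      rw [(hasDerivAt_PHI (hsubIoo (Set.Ioo_subset_Icc_self hy))).deriv]
      exact hPSInonneg y (Set.Ioo_subset_Icc_self hy)
  have hstepB : ∀ y ∈ Set.Icc (0:ℝ) s, 0 ≤ PHI y := by
    intro y hy
    have := hPHImono (Set.left_mem_Icc.mpr hs_pos.le) hy hy.1
    rwa [PHI_zero] at this
  -- Step C : PHI concave on [s, 1]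
  have hsubIoo2 : Set.Ioo s 1 ⊆ Set.Ioo (-1:ℝ) 1 := by
    intro y hy; exact ⟨by linarith [hy.1, hs_pos], hy.2⟩
  have hconc : ConcaveOn ℝ (Set.Icc s 1) PHI := by
    apply concaveOn_of_deriv2_nonpos (convex_Icc s 1) hPHIcont.continuousOn
    · intro y hy
      rw [interior_Icc] at hy
      exact (hasDerivAt_PHI (hsubIoo2 hy)).differentiableAt.differentiableWithinAt
    · intro y hy
      rw [interior_Icc] at hy
      have hev : deriv PHI =ᶠ[nhds y] PSI := by
        filter_upwards [isOpen_Ioo.mem_nhds (hsubIoo2 hy)] with z hz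
        exact (hasDerivAt_PHI hz).deriv
      have : HasDerivAt (deriv PHI) (4*l2 - 1/(1+y) - 1/(1-y)) y :=
        (hasDerivAt_PSI (hsubIoo2 hy)).congr_of_eventuallyEq hev
      exact this.differentiableAt.differentiableWithinAt
    · intro y hy
      rw [interior_Icc] at hy
      have hmem := hsubIoo2 hy
      have hev : deriv PHI =ᶠ[nhds y] PSI := by
        filter_upwards [isOpen_Ioo.mem_nhds hmem] with z hz
        exact (hasDerivAt_PHI hz).deriv
      have hd2 : deriv (deriv PHI) y = 4*l2 - 1/(1+y) - 1/(1-y) := by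
        rw [hev.deriv_eq]
        exact (hasDerivAt_PSI hmem).deriv
      simp only [Function.iterate_succ, Function.iterate_zero, Function.comp, id_eq]
      rw [hd2]
      have h1y : (0:ℝ) < 1 + y := by linarith [hmem.1]
      have h2y : (0:ℝ) < 1 - y := by linarith [hmem.2]
      have hpos2 : (0:ℝ) < 1 - y^2 := by nlinarith [hmem.1, hmem.2]
      have hsum : 1/(1+y) + 1/(1-y) = 2/(1-y^2) := by field_simp; ring
      have hy2 : s^2 ≤ y^2 := by nlinarith [hy.1, hs_pos]
      have hup : 1 - y^2 ≤ 1/(2*l2) := by rw [hs_sq] at hy2; linarith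
      have : 4*l2 ≤ 2/(1-y^2) := by
        rw [le_div_iff₀ hpos2]
        calc 4*l2*(1-y^2) ≤ 4*l2 * (1/(2*l2)) := by
              apply mul_le_mul_of_nonneg_left hup (by linarith)
          _ = 2 := by field_simp; ring
      linarith [hsum]
  -- Step D : PHI ≥ 0 on [s, 1]
  have hstepD : ∀ y ∈ Set.Icc s (1:ℝ), 0 ≤ PHI y := by
    intro y hy
    have h1s : (0:ℝ) < 1 - s := by linarith
    set lam := (1 - y)/(1 - s) with hlam
    set mu := (y - s)/(1 - s) with hmu
    have hlam0 : 0 ≤ lam := by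
      apply div_nonneg (by linarith [hy.2]) h1s.le
    have hmu0 : 0 ≤ mu := by
      apply div_nonneg (by linarith [hy.1]) h1s.le
    have h1s' : (1:ℝ) - s ≠ 0 := h1s.ne'
    have hsum : lam + mu = 1 := by
      rw [hlam, hmu, ← add_div, div_eq_one_iff_eq h1s']; ring
    have hcomb : lam • s + mu • (1:ℝ) = y := by
      simp only [smul_eq_mul, hlam, hmu]
      field_simp
      ring
    have := hconc.2 (Set.left_mem_Icc.mpr hs_lt1.le) (Set.right_mem_Icc.mpr hs_lt1.le)
      hlam0 hmu0 hsum
    rw [hcomb] at this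
    have hPs : 0 ≤ PHI s := hstepB s (Set.right_mem_Icc.mpr hs_pos.le)
    rw [PHI_one] at this
    simp only [smul_eq_mul, mul_zero, add_zero] at this
    nlinarith [mul_nonneg hlam0 hPs]
  intro x hx
  rcases le_total 0 x with hx0 | hx0
  · rcases le_total x s with hxs | hxs
    · exact hstepB x ⟨hx0, hxs⟩
    · exact hstepD x ⟨hxs, hx.2⟩
  · rw [← PHI_even x]
    rcases le_total (-x) s with hxs | hxs
    · exact hstepB (-x) ⟨by linarith, hxs⟩
    · exact hstepD (-x) ⟨hxs, by linarith [hx.1]⟩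

private lemma gibbs (t α : ℝ) (ht : 0 ≤ t) (hα : 0 < α) :
    t * Real.log α + (t - α) ≤ t * Real.log t := by
  rcases eq_or_lt_of_le ht with h | h
  · simp [← h]; linarith
  · have hd : (0:ℝ) < α / t := div_pos hα h
    have := Real.log_le_sub_one_of_pos hd
    rw [Real.log_div hα.ne' h.ne'] at this
    have := mul_le_mul_of_nonneg_left this h.le
    have he : t * (α/t - 1) = α - t := by field_simp
    rw [he] at this
    linarith [this]

private lemma L1a (a0 a1 p q α : ℝ) (ha0 : 0 ≤ a0) (ha1 : 0 ≤ a1)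
    (hp0 : 0 ≤ p) (hp1 : p ≤ 1) (hq1 : p ≤ q) (hq2 : 1 - p ≤ q)
    (hα : α = (a0 + a1)/2) (hαpos : 0 < α) :
    p*a0*Real.log a0 + (1-p)*a1*Real.log a1
      - (p*a0+(1-p)*a1)*Real.log (p*a0+(1-p)*a1)
    ≤ q*(a0*Real.log a0 + a1*Real.log a1 - 2*α*Real.log α) := by
  have hP0 : 0 ≤ p*a0 + (1-p)*a1 := by
    have := mul_nonneg hp0 ha0
    have := mul_nonneg (by linarith : (0:ℝ) ≤ 1-p) ha1
    linarith
  have g0 := gibbs a0 α ha0 hαpos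
  have g1 := gibbs a1 α ha1 hαpos
  have hunif : 0 ≤ a0*Real.log a0 + a1*Real.log a1 - 2*α*Real.log α := by
    have h2α : a0 + a1 = 2*α := by rw [hα]; ring
    have e : a0*Real.log α + a1*Real.log α = 2*α*Real.log α := by
      linear_combination (Real.log α) * h2α
    linarith [g0, g1, e]
  have gP := gibbs (p*a0+(1-p)*a1) α hP0 hαpos
  rcases le_total (1/2 : ℝ) p with hhalf | hhalf
  · -- q ≥ p ≥ 1/2, use coefficient c = 2p-1 on a1
    have hc : (0:ℝ) ≤ 2*p - 1 := by linarith
    have g1s := mul_le_mul_of_nonneg_left g1 hc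
    have step2 : p*(a0*Real.log a0 + a1*Real.log a1 - 2*α*Real.log α)
        ≤ q*(a0*Real.log a0 + a1*Real.log a1 - 2*α*Real.log α) :=
      mul_le_mul_of_nonneg_right hq1 hunif
    have e : (p*a0+(1-p)*a1) + (2*p-1)*a1 = 2*p*α := by rw [hα]; ring
    have Ekey : ((p*a0+(1-p)*a1) * Real.log α + ((p*a0+(1-p)*a1) - α))
        + ((2*p-1)*(a1*Real.log α + (a1 - α))) = 2*p*α*Real.log α := by
      linear_combination (Real.log α + 1) * e
    nlinarith [gP, g1s, Ekey, step2]
  · -- p ≤ 1/2 ≤ 1-p ≤ q, use coefficient c = 1-2p on a0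
    have hc : (0:ℝ) ≤ 1 - 2*p := by linarith
    have g0s := mul_le_mul_of_nonneg_left g0 hc
    have step2 : (1-p)*(a0*Real.log a0 + a1*Real.log a1 - 2*α*Real.log α)
        ≤ q*(a0*Real.log a0 + a1*Real.log a1 - 2*α*Real.log α) :=
      mul_le_mul_of_nonneg_right hq2 hunif
    have e : (p*a0+(1-p)*a1) + (1-2*p)*a0 = 2*(1-p)*α := by rw [hα]; ring
    have Ekey : ((p*a0+(1-p)*a1) * Real.log α + ((p*a0+(1-p)*a1) - α))
        + ((1-2*p)*(a0*Real.log α + (a0 - α))) = 2*(1-p)*α*Real.log α := by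
      linear_combination (Real.log α + 1) * e
    nlinarith [gP, g0s, Ekey, step2]

private lemma L1b (a0 a1 α : ℝ) (ha0 : 0 ≤ a0) (ha1 : 0 ≤ a1)
    (hα : α = (a0 + a1)/2) (hαpos : 0 < α) :
    a0*Real.log a0 + a1*Real.log a1 - 2*α*Real.log α
      ≤ 2*Real.log 2 * ((a0-a1)/2)^2 / α := by
  have hαne : α ≠ 0 := hαpos.ne'
  set y : ℝ := (a0 - a1)/(2*α) with hy
  have e0 : α * (1 + y) = a0 := by
    rw [hy]; field_simp; rw [hα]; ring
  have e1 : α * (1 - y) = a1 := by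
    rw [hy]; field_simp; rw [hα]; ring
  have hy1 : -1 ≤ y := by
    rw [hy, le_div_iff₀ (by linarith : (0:ℝ) < 2*α)]; linarith
  have hy2 : y ≤ 1 := by
    rw [hy, div_le_iff₀ (by linarith : (0:ℝ) < 2*α)]; linarith
  have hT0 : a0*Real.log a0 = α*(1+y)*Real.log α + α*((1+y)*Real.log (1+y)) := by
    rcases eq_or_lt_of_le ha0 with h | h
    · have h1y : 1 + y = 0 := by
        have : α * (1+y) = 0 := by rw [e0, ← h]
        rcases mul_eq_zero.mp this with h' | h'
        · exact absurd h' hαne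
        · exact h'
      rw [← h, h1y]; simp
    · have h1y : 0 < 1 + y := by
        rcases le_or_gt (1+y) 0 with h' | h'
        · exfalso
          have : α * (1+y) ≤ 0 := mul_nonpos_of_nonneg_of_nonpos hαpos.le h'
          rw [e0] at this; linarith
        · exact h'
      rw [← e0, Real.log_mul hαne h1y.ne']
      ring
  have hT1 : a1*Real.log a1 = α*(1-y)*Real.log α + α*((1-y)*Real.log (1-y)) := by
    rcases eq_or_lt_of_le ha1 with h | h
    · have h1y : 1 - y = 0 := by
        have : α * (1-y) = 0 := by rw [e1, ← h]
        rcases mul_eq_zero.mp this with h' | h'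
        · exact absurd h' hαne
        · exact h'
      rw [← h, h1y]; simp
    · have h1y : 0 < 1 - y := by
        rcases le_or_gt (1-y) 0 with h' | h'
        · exfalso
          have : α * (1-y) ≤ 0 := mul_nonpos_of_nonneg_of_nonpos hαpos.le h'
          rw [e1] at this; linarith
        · exact h'
      rw [← e1, Real.log_mul hαne h1y.ne']
      ring
  have hcore := core_nonneg y ⟨hy1, hy2⟩
  simp only [PHI] at hcore
  have hcore' := mul_le_mul_of_nonneg_left
    (by linarith : (1+y)*Real.log (1+y) + (1-y)*Real.log (1-y) ≤ 2*Real.log 2*y^2) hαpos.le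
  have hR : 2*Real.log 2 * ((a0-a1)/2)^2 / α = α*(2*Real.log 2*y^2) := by
    have hdiff : a0 - a1 = 2*α*y := by linarith [e0, e1]
    rw [hdiff]; field_simp
  rw [hR, hT0, hT1]
  nlinarith [hcore']

private lemma key_scalar (a0 a1 p q : ℝ) (ha0 : 0 ≤ a0) (ha1 : 0 ≤ a1)
    (hp0 : 0 ≤ p) (hp1 : p ≤ 1) (hq1 : p ≤ q) (hq2 : 1 - p ≤ q) :
    p*a0*Real.log a0 + (1-p)*a1*Real.log a1
      - (p*a0+(1-p)*a1)*Real.log (p*a0+(1-p)*a1)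
    ≤ 2*q*Real.log 2 * (((a0-a1)/2)^2 / ((a0+a1)/2)) := by
  have hq0 : 0 ≤ q := by linarith
  rcases eq_or_lt_of_le (by linarith : (0:ℝ) ≤ a0 + a1) with h | h
  · have h0 : a0 = 0 := by linarith
    have h1 : a1 = 0 := by linarith
    simp [h0, h1]
  · have hαpos : 0 < (a0+a1)/2 := by linarith
    have hA := L1a a0 a1 p q ((a0+a1)/2) ha0 ha1 hp0 hp1 hq1 hq2 rfl hαpos
    have hB := L1b a0 a1 ((a0+a1)/2) ha0 ha1 rfl hαpos
    have hB' := mul_le_mul_of_nonneg_left hB hq0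
    have hR : q * (2*Real.log 2 * ((a0-a1)/2)^2 / ((a0+a1)/2))
        = 2*q*Real.log 2 * (((a0-a1)/2)^2 / ((a0+a1)/2)) := by
      field_simp
    linarith [hA, hB', hR.ge, hR.le]

private lemma key_scalar_bits (a0 a1 p q : ℝ) (ha0 : 0 ≤ a0) (ha1 : 0 ≤ a1)
    (hp0 : 0 ≤ p) (hp1 : p ≤ 1) (hq1 : p ≤ q) (hq2 : 1 - p ≤ q) :
    p*a0*Real.logb 2 a0 + (1-p)*a1*Real.logb 2 a1
      - (p*a0+(1-p)*a1)*Real.logb 2 (p*a0+(1-p)*a1)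
    ≤ 2*q*(((a0-a1)/2)^2 / ((a0+a1)/2)) := by
  have hl2 : (0:ℝ) < Real.log 2 := by have := log2_half; linarith
  have h := key_scalar a0 a1 p q ha0 ha1 hp0 hp1 hq1 hq2
  have h' := div_le_div_of_nonneg_right h hl2.le
  have eL : (p*a0*Real.log a0 + (1-p)*a1*Real.log a1
      - (p*a0+(1-p)*a1)*Real.log (p*a0+(1-p)*a1)) / Real.log 2
      = p*a0*Real.logb 2 a0 + (1-p)*a1*Real.logb 2 a1
      - (p*a0+(1-p)*a1)*Real.logb 2 (p*a0+(1-p)*a1) := by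
    simp only [Real.logb]; ring
  have eR : (2*q*Real.log 2 * (((a0-a1)/2)^2 / ((a0+a1)/2))) / Real.log 2
      = 2*q*(((a0-a1)/2)^2 / ((a0+a1)/2)) := by
    rw [div_eq_iff hl2.ne']; ring
  rw [eL, eR] at h'
  exact h'


local notation "K" => (starRingEnd ℂ)

private lemma onb_complete {B : Fin 2 → Fin 2 → ℂ} (hB : IsONB B) (k l : Fin 2) :
    K (B 0 k) * B 0 l + K (B 1 k) * B 1 l = if k = l then 1 else 0 := by
  classical
  set N : Matrix (Fin 2) (Fin 2) ℂ := Matrix.of (fun i j => B i j) with hN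
  have hNN : N * Nᴴ = 1 := by
    ext i j
    have h := hB j i
    simp only [dotProduct, Fin.sum_univ_two, Pi.star_apply, Complex.star_def] at h
    simp only [Matrix.mul_apply, Matrix.conjTranspose_apply, Fin.sum_univ_two,
      Matrix.one_apply, hN, Matrix.of_apply, Complex.star_def]
    rcases eq_or_ne i j with rfl | hne
    · simp only [if_pos rfl] at h ⊢
      linear_combination h
    · simp only [if_neg hne, if_neg (Ne.symm hne)] at *
      linear_combination h
  have hcomm := mul_eq_one_comm.mp hNN
  have h2 := Matrix.ext_iff.mpr hcomm k l
  simp only [Matrix.mul_apply, Matrix.conjTranspose_apply, Fin.sum_univ_two,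
    Matrix.one_apply, hN, Matrix.of_apply, Complex.star_def] at h2
  exact h2

private lemma sum_outProb_eq {B : Fin 2 → Fin 2 → ℂ} (hB : IsONB B)
    (M : Matrix (Fin 2) (Fin 2) ℂ) :
    outProb M (B 0) + outProb M (B 1) = (M 0 0).re + (M 1 1).re := by
  have hc : (star (B 0) ⬝ᵥ M.mulVec (B 0)) + (star (B 1) ⬝ᵥ M.mulVec (B 1))
      = M 0 0 + M 1 1 := by
    simp only [dotProduct, Matrix.mulVec, Fin.sum_univ_two, Pi.star_apply, Complex.star_def]
    have h00 := onb_complete hB 0 0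
    have h01 := onb_complete hB 0 1
    have h10 := onb_complete hB 1 0
    have h11 := onb_complete hB 1 1
    rw [if_pos rfl] at h00
    rw [if_pos rfl] at h11
    rw [if_neg (by decide : ¬((0:Fin 2) = 1))] at h01
    rw [if_neg (by decide : ¬((1:Fin 2) = 0))] at h10
    linear_combination M 0 0 * h00 + M 0 1 * h01 + M 1 0 * h10 + M 1 1 * h11
  have := congrArg Complex.re hc
  simpa [outProb] using this

private def sigW (B : Fin 2 → Fin 2 → ℂ) : ℂ := B 0 0 * K (B 0 1) - B 1 0 * K (B 1 1)
private def sigU (B : Fin 2 → Fin 2 → ℂ) : ℝ :=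
  Complex.normSq (B 0 0) - Complex.normSq (B 1 0)
private def sigV (B : Fin 2 → Fin 2 → ℂ) : ℝ :=
  Complex.normSq (B 0 1) - Complex.normSq (B 1 1)

/-- Bloch coordinates of σ_B = |0_B⟩⟨0_B| - |1_B⟩⟨1_B|. -/
private def bl (B : Fin 2 → Fin 2 → ℂ) : Fin 3 → ℝ :=
  ![(sigW B).re, (sigW B).im, sigU B]

private lemma sigV_eq {B : Fin 2 → Fin 2 → ℂ} (hB : IsONB B) : sigV B = - sigU B := by
  have h0 := hB 0 0
  have h1 := hB 1 1
  rw [if_pos rfl] at h0 h1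
  simp only [dotProduct, Fin.sum_univ_two, Pi.star_apply, Complex.star_def] at h0 h1
  rw [← Complex.normSq_eq_conj_mul_self, ← Complex.normSq_eq_conj_mul_self] at h0 h1
  have h0' := congrArg Complex.re h0
  have h1' := congrArg Complex.re h1
  simp only [Complex.add_re, Complex.ofReal_re, Complex.one_re] at h0' h1'
  simp only [sigV, sigU]
  linarith

-- trace of σ_B σ_C as overlaps (pure algebra)
private lemma trace_sigma (B C : Fin 2 → Fin 2 → ℂ) :
    ((sigU B : ℂ)) * ((sigU C : ℂ)) + sigW B * K (sigW C) + K (sigW B) * sigW C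
       + ((sigV B : ℂ)) * ((sigV C : ℂ))
    = (star (B 0) ⬝ᵥ C 0) * K (star (B 0) ⬝ᵥ C 0)
      - (star (B 0) ⬝ᵥ C 1) * K (star (B 0) ⬝ᵥ C 1)
      - (star (B 1) ⬝ᵥ C 0) * K (star (B 1) ⬝ᵥ C 0)
      + (star (B 1) ⬝ᵥ C 1) * K (star (B 1) ⬝ᵥ C 1) := by
  simp only [sigW, sigU, sigV, dotProduct, Fin.sum_univ_two, Pi.star_apply, Complex.star_def,
    _root_.map_add, _root_.map_mul, _root_.map_sub, Complex.conj_conj]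
  push_cast [Complex.normSq_eq_conj_mul_self]
  ring

private lemma bl0 (B : Fin 2 → Fin 2 → ℂ) : bl B 0 = (sigW B).re := rfl
private lemma bl1 (B : Fin 2 → Fin 2 → ℂ) : bl B 1 = (sigW B).im := rfl
private lemma bl2 (B : Fin 2 → Fin 2 → ℂ) : bl B 2 = sigU B := rfl

private lemma bloch_dot_eq (B C : Fin 2 → Fin 2 → ℂ) (hB : IsONB B) (hC : IsONB C) :
    2*(bl B 0 * bl C 0 + bl B 1 * bl C 1 + bl B 2 * bl C 2)
    = Complex.normSq (star (B 0) ⬝ᵥ C 0) - Complex.normSq (star (B 0) ⬝ᵥ C 1)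
      - Complex.normSq (star (B 1) ⬝ᵥ C 0) + Complex.normSq (star (B 1) ⬝ᵥ C 1) := by
  have h := congrArg Complex.re (trace_sigma B C)
  rw [Complex.mul_conj, Complex.mul_conj, Complex.mul_conj, Complex.mul_conj] at h
  rw [sigV_eq hB, sigV_eq hC] at h
  simp only [Complex.add_re, Complex.sub_re, Complex.mul_re, Complex.ofReal_re,
    Complex.ofReal_im, Complex.conj_re, Complex.conj_im, Complex.ofReal_neg,
    Complex.neg_re, Complex.neg_im] at h
  rw [bl0, bl1, bl2, bl0, bl1, bl2]
  linarith

private lemma bloch_self (B : Fin 2 → Fin 2 → ℂ) (hB : IsONB B) :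
    bl B 0^2 + bl B 1^2 + bl B 2^2 = 1 := by
  have h := bloch_dot_eq B B hB hB
  rw [hB 0 0, hB 0 1, hB 1 0, hB 1 1] at h
  rw [if_pos rfl, if_pos rfl, if_neg (by decide : ¬((0:Fin 2) = 1)),
    if_neg (by decide : ¬((1:Fin 2) = 0))] at h
  simp only [Complex.normSq_one, Complex.normSq_zero] at h
  linear_combination h/2

private lemma bloch_orth (B C : Fin 2 → Fin 2 → ℂ) (hB : IsONB B) (hC : IsONB C)
    (hM : AreMUB B C) :
    bl B 0 * bl C 0 + bl B 1 * bl C 1 + bl B 2 * bl C 2 = 0 := by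
  have h := bloch_dot_eq B C hB hC
  have hn : ∀ i j, Complex.normSq (star (B i) ⬝ᵥ C j) = 1/2 := by
    intro i j
    have := hM i j
    rw [← Complex.sq_norm, this]
    norm_num
  rw [hn 0 0, hn 0 1, hn 1 0, hn 1 1] at h
  linarith

private lemma diff_eq {B : Fin 2 → Fin 2 → ℂ} (hB : IsONB B)
    (M : Matrix (Fin 2) (Fin 2) ℂ) (hH : M.IsHermitian) :
    outProb M (B 0) - outProb M (B 1)
    = 2*((M 0 1).re * bl B 0 + (M 0 1).im * bl B 1
        + (((M 0 0).re - (M 1 1).re)/2) * bl B 2) := by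
  have e10 : M 1 0 = K (M 0 1) := (hH.apply 1 0).symm
  have h00 : K (M 0 0) = M 0 0 := hH.apply 0 0
  have h11 : K (M 1 1) = M 1 1 := hH.apply 1 1
  have h00im : (M 0 0).im = 0 := Complex.conj_eq_iff_im.mp h00
  have h11im : (M 1 1).im = 0 := Complex.conj_eq_iff_im.mp h11
  have hc : (star (B 0) ⬝ᵥ M.mulVec (B 0)) - (star (B 1) ⬝ᵥ M.mulVec (B 1))
      = M 0 0 * ((sigU B : ℂ)) + M 0 1 * K (sigW B) + M 1 0 * sigW B
        + M 1 1 * ((sigV B : ℂ)) := by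
    simp only [dotProduct, Matrix.mulVec, Fin.sum_univ_two, Pi.star_apply, Complex.star_def,
      sigW, sigU, sigV, _root_.map_add, _root_.map_mul, _root_.map_sub, Complex.conj_conj]
    push_cast [Complex.normSq_eq_conj_mul_self]
    ring
  have h := congrArg Complex.re hc
  rw [sigV_eq hB, e10] at h
  simp only [outProb] at *
  simp only [Complex.sub_re, Complex.add_re, Complex.mul_re, Complex.ofReal_re,
    Complex.ofReal_im, Complex.conj_re, Complex.conj_im, Complex.ofReal_neg,
    Complex.neg_re, Complex.neg_im, h00im, h11im] at h
  rw [bl0, bl1, bl2]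
  linarith

private lemma psd_diag0 (M : Matrix (Fin 2) (Fin 2) ℂ) (h : M.PosSemidef) :
    0 ≤ (M 0 0).re := by
  have h2 := h.dotProduct_mulVec_nonneg ![1, 0]
  rw [Complex.le_def] at h2
  have : (star ![(1:ℂ), 0] ⬝ᵥ M.mulVec ![1, 0]) = M 0 0 := by
    simp [dotProduct, Matrix.mulVec, Fin.sum_univ_two]
  rw [this] at h2
  simpa using h2.1

private lemma psd_diag1 (M : Matrix (Fin 2) (Fin 2) ℂ) (h : M.PosSemidef) :
    0 ≤ (M 1 1).re := by
  have h2 := h.dotProduct_mulVec_nonneg ![0, 1]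
  rw [Complex.le_def] at h2
  have : (star ![(0:ℂ), 1] ⬝ᵥ M.mulVec ![0, 1]) = M 1 1 := by
    simp [dotProduct, Matrix.mulVec, Fin.sum_univ_two]
  rw [this] at h2
  simpa using h2.1

private lemma gnorm_le (M : Matrix (Fin 2) (Fin 2) ℂ) (h : M.PosSemidef) :
    (M 0 1).re^2 + (M 0 1).im^2 + (((M 0 0).re - (M 1 1).re)/2)^2
      ≤ (((M 0 0).re + (M 1 1).re)/2)^2 := by
  have hH := h.1
  have e10 : M 1 0 = K (M 0 1) := (hH.apply 1 0).symm
  have h00im : (M 0 0).im = 0 := Complex.conj_eq_iff_im.mp (hH.apply 0 0)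
  have h11im : (M 1 1).im = 0 := Complex.conj_eq_iff_im.mp (hH.apply 1 1)
  set A := (M 0 0).re with hA
  set D := (M 1 1).re with hD
  have hM00 : M 0 0 = (A : ℂ) := by apply Complex.ext <;> simp [h00im, hA]
  have hM11 : M 1 1 = (D : ℂ) := by apply Complex.ext <;> simp [h11im, hD]
  have hApos := psd_diag0 M h
  have hDpos := psd_diag1 M h
  have hq0 : 0 ≤ A*(A*D - ((M 0 1).re^2 + (M 0 1).im^2)) := by
    have h2 := h.dotProduct_mulVec_nonneg ![M 0 1, -(M 0 0)]
    rw [Complex.le_def] at h2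
    have hc : (star ![M 0 1, -(M 0 0)] ⬝ᵥ M.mulVec ![M 0 1, -(M 0 0)])
        = ((A*(A*D - Complex.normSq (M 0 1)) : ℝ) : ℂ) := by
      simp only [dotProduct, Matrix.mulVec, Fin.sum_univ_two, Pi.star_apply,
        Matrix.cons_val_zero, Matrix.cons_val_one, Matrix.head_cons, Complex.star_def,
        map_neg, e10, hM00, hM11, Complex.conj_ofReal]
      push_cast [Complex.normSq_eq_conj_mul_self]
      ring
    rw [hc] at h2
    have := h2.1
    rw [Complex.ofReal_re] at this
    rw [Complex.normSq_apply] at this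
    simpa [pow_two] using this
  have hq1 : 0 ≤ D*(A*D - ((M 0 1).re^2 + (M 0 1).im^2)) := by
    have h2 := h.dotProduct_mulVec_nonneg ![M 1 1, -(M 1 0)]
    rw [Complex.le_def] at h2
    have hc : (star ![M 1 1, -(M 1 0)] ⬝ᵥ M.mulVec ![M 1 1, -(M 1 0)])
        = ((D*(A*D - Complex.normSq (M 0 1)) : ℝ) : ℂ) := by
      simp only [dotProduct, Matrix.mulVec, Fin.sum_univ_two, Pi.star_apply,
        Matrix.cons_val_zero, Matrix.cons_val_one, Matrix.head_cons, Complex.star_def,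
        map_neg, e10, hM00, hM11, Complex.conj_ofReal, Complex.conj_conj]
      push_cast [Complex.normSq_eq_conj_mul_self]
      ring
    rw [hc] at h2
    have := h2.1
    rw [Complex.ofReal_re] at this
    rw [Complex.normSq_apply] at this
    simpa [pow_two] using this
  rcases eq_or_lt_of_le (by linarith : (0:ℝ) ≤ A + D) with h0 | h0
  · -- A = D = 0 : off-diagonal must vanish
    have hA0 : A = 0 := by linarith
    have hD0 : D = 0 := by linarith
    have h2 := h.dotProduct_mulVec_nonneg ![1, -(K (M 0 1))]
    rw [Complex.le_def] at h2
    have hc : (star ![(1:ℂ), -(K (M 0 1))] ⬝ᵥ M.mulVec ![1, -(K (M 0 1))])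
        = ((-2 * Complex.normSq (M 0 1) : ℝ) : ℂ) := by
      simp only [dotProduct, Matrix.mulVec, Fin.sum_univ_two, Pi.star_apply,
        Matrix.cons_val_zero, Matrix.cons_val_one, Matrix.head_cons, Complex.star_def,
        map_neg, _root_.map_one, e10, hM00, hM11, Complex.conj_ofReal, Complex.conj_conj,
        hA0, hD0]
      push_cast [Complex.normSq_eq_conj_mul_self]
      ring
    rw [hc] at h2
    have h3 := h2.1
    rw [Complex.ofReal_re, Complex.zero_re] at h3
    have h4 : Complex.normSq (M 0 1) ≤ 0 := by linarith
    rw [Complex.normSq_apply] at h4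
    have h5 : (M 0 1).re^2 + (M 0 1).im^2 ≤ 0 := by nlinarith [h4]
    rw [hA0, hD0]
    nlinarith [h5]
  · have hdet : 0 ≤ A*D - ((M 0 1).re^2 + (M 0 1).im^2) := by nlinarith [hq0, hq1]
    nlinarith [hdet]

private lemma sum_three_sq_le (B₁ B₂ B₃ : Fin 2 → Fin 2 → ℂ)
    (hB₁ : IsONB B₁) (hB₂ : IsONB B₂) (hB₃ : IsONB B₃)
    (h12 : AreMUB B₁ B₂) (h13 : AreMUB B₁ B₃) (h23 : AreMUB B₂ B₃)
    (M : Matrix (Fin 2) (Fin 2) ℂ) (hM : M.PosSemidef) :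
    ((outProb M (B₁ 0) - outProb M (B₁ 1))/2)^2
      + ((outProb M (B₂ 0) - outProb M (B₂ 1))/2)^2
      + ((outProb M (B₃ 0) - outProb M (B₃ 1))/2)^2
    ≤ ((outProb M (B₁ 0) + outProb M (B₁ 1))/2)^2 := by
  -- the 3×3 real matrix of Bloch vectors has orthonormal rows, hence orthonormal columns
  set R : Matrix (Fin 3) (Fin 3) ℝ :=
    Matrix.of (fun m k => (![bl B₁, bl B₂, bl B₃]) m k) with hR
  have hrows : R * Rᵀ = 1 := by
    ext m n
    simp only [Matrix.mul_apply, Matrix.transpose_apply, Fin.sum_univ_three, hR,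
      Matrix.of_apply, Matrix.one_apply]
    have d11 := bloch_self B₁ hB₁
    have d22 := bloch_self B₂ hB₂
    have d33 := bloch_self B₃ hB₃
    have d12 := bloch_orth B₁ B₂ hB₁ hB₂ h12
    have d13 := bloch_orth B₁ B₃ hB₁ hB₃ h13
    have d23 := bloch_orth B₂ B₃ hB₂ hB₃ h23
    fin_cases m <;> fin_cases n <;>
      simp only [Matrix.cons_val_zero, Matrix.cons_val_one, Matrix.head_cons,
        Matrix.cons_val_two, Matrix.tail_cons] <;>
      norm_num [Fin.ext_iff] <;>
      first
        | linear_combination d11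
        | linear_combination d22
        | linear_combination d33
        | linear_combination d12
        | linear_combination d13
        | linear_combination d23
  have hcols := mul_eq_one_comm.mp hrows
  have hc : ∀ k l, bl B₁ k * bl B₁ l + bl B₂ k * bl B₂ l + bl B₃ k * bl B₃ l
      = if k = l then 1 else 0 := by
    intro k l
    have h2 := Matrix.ext_iff.mpr hcols k l
    simp only [Matrix.mul_apply, Matrix.transpose_apply, Fin.sum_univ_three, hR,
      Matrix.of_apply, Matrix.one_apply, Matrix.cons_val_zero, Matrix.cons_val_one,
      Matrix.head_cons, Matrix.cons_val_two, Matrix.tail_cons] at h2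
    linear_combination h2
  have c00 := hc 0 0
  have c11 := hc 1 1
  have c22 := hc 2 2
  have c01 := hc 0 1
  have c02 := hc 0 2
  have c12 := hc 1 2
  rw [if_pos rfl] at c00 c11 c22
  rw [if_neg (by decide : ¬((0:Fin 3) = 1))] at c01
  rw [if_neg (by decide : ¬((0:Fin 3) = 2))] at c02
  rw [if_neg (by decide : ¬((1:Fin 3) = 2))] at c12
  rw [diff_eq hB₁ M hM.1, diff_eq hB₂ M hM.1, diff_eq hB₃ M hM.1, sum_outProb_eq hB₁ M]
  have hg := gnorm_le M hM
  set er := (M 0 1).re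
  set ei := (M 0 1).im
  set A := (M 0 0).re
  set D := (M 1 1).re
  have besseleq : (er * bl B₁ 0 + ei * bl B₁ 1 + ((A - D)/2) * bl B₁ 2)^2
      + (er * bl B₂ 0 + ei * bl B₂ 1 + ((A - D)/2) * bl B₂ 2)^2
      + (er * bl B₃ 0 + ei * bl B₃ 1 + ((A - D)/2) * bl B₃ 2)^2
      = er^2 + ei^2 + ((A - D)/2)^2 := by
    linear_combination (er^2)*c00 + (ei^2)*c11 + (((A-D)/2)^2)*c22
      + (2*er*ei)*c01 + (2*er*((A-D)/2))*c02 + (2*ei*((A-D)/2))*c12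
  linarith [besseleq, hg]


private lemma mutInfo_le_sum {S : Type*} [Fintype S] (B : Fin 2 → Fin 2 → ℂ)
    (p : Fin 2 → ℝ) (E : S → Matrix (Fin 2) (Fin 2) ℂ) (q : ℝ)
    (hp : ∀ i, 0 ≤ p i) (hpsum : ∑ i, p i = 1)
    (ha : ∀ s i, 0 ≤ outProb (E s) (B i))
    (hasum : ∀ i, ∑ s, outProb (E s) (B i) = 1)
    (hq0 : p 0 ≤ q) (hq1 : p 1 ≤ q) :
    mutInfo B p E ≤ 2*q*∑ s, (((outProb (E s) (B 0)) - (outProb (E s) (B 1)))/2)^2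
      / (((outProb (E s) (B 0)) + (outProb (E s) (B 1)))/2) := by
  classical
  have hpsum2 : p 0 + p 1 = 1 := by rw [← Fin.sum_univ_two p]; exact hpsum
  simp only [mutInfo, shannonEntropy]
  set a : S → Fin 2 → ℝ := fun s i => outProb (E s) (B i) with hadef
  have hQ : ∀ s, (∑ j, p j * a s j) = p 0 * a s 0 + p 1 * a s 1 :=
    fun s => Fin.sum_univ_two _
  have hS : ∀ s, (∑ i, p i * a s i) *
      (-∑ i, (p i * a s i / ∑ j, p j * a s j) * Real.logb 2 (p i * a s i / ∑ j, p j * a s j))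
      = -(p 0 * a s 0 * Real.logb 2 (p 0)) - (p 1 * a s 1 * Real.logb 2 (p 1))
        - (p 0 * a s 0 * Real.logb 2 (a s 0) + p 1 * a s 1 * Real.logb 2 (a s 1)
           - (p 0 * a s 0 + p 1 * a s 1) * Real.logb 2 (p 0 * a s 0 + p 1 * a s 1)) := by
    intro s
    rw [hQ s, Fin.sum_univ_two]
    have h00 : 0 ≤ p 0 * a s 0 := mul_nonneg (hp 0) (ha s 0)
    have h11 : 0 ≤ p 1 * a s 1 := mul_nonneg (hp 1) (ha s 1)
    rcases eq_or_lt_of_le (add_nonneg h00 h11) with hQ0 | hQ0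
    · have e0 : p 0 * a s 0 = 0 := by linarith
      have e1 : p 1 * a s 1 = 0 := by linarith
      rw [e0, e1]; simp
    · have expand : ∀ (pi ai : ℝ), 0 ≤ pi → 0 ≤ ai →
          pi * ai ≤ p 0 * a s 0 + p 1 * a s 1 →
          pi * ai * Real.logb 2 (pi * ai / (p 0 * a s 0 + p 1 * a s 1))
          = pi * ai * Real.logb 2 pi + pi * ai * Real.logb 2 ai
            - pi * ai * Real.logb 2 (p 0 * a s 0 + p 1 * a s 1) := by
        intro pi ai hpi hai hle
        rcases eq_or_lt_of_le (mul_nonneg hpi hai) with h | h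
        · rw [← h]; simp
        · have hpi' : pi ≠ 0 := by
            rintro rfl; rw [zero_mul] at h; exact lt_irrefl 0 h
          have hai' : ai ≠ 0 := by
            rintro rfl; rw [mul_zero] at h; exact lt_irrefl 0 h
          rw [Real.logb_div (mul_ne_zero hpi' hai') hQ0.ne',
            Real.logb_mul hpi' hai']
          ring
      have hmulQ : ∀ (u : ℝ), (p 0 * a s 0 + p 1 * a s 1) *
          (u / (p 0 * a s 0 + p 1 * a s 1) * Real.logb 2 (u / (p 0 * a s 0 + p 1 * a s 1)))
          = u * Real.logb 2 (u / (p 0 * a s 0 + p 1 * a s 1)) := by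
        intro u
        rw [div_mul_eq_mul_div, mul_div_assoc', mul_comm, mul_div_assoc,
          div_self hQ0.ne', mul_one]
      rw [mul_neg, mul_add, hmulQ, hmulQ,
        expand (p 0) (a s 0) (hp 0) (ha s 0) (by linarith),
        expand (p 1) (a s 1) (hp 1) (ha s 1) (by linarith)]
      ring
  rw [Finset.sum_congr rfl (fun s _ => hS s)]
  have hsplit : ∑ s, (-(p 0 * a s 0 * Real.logb 2 (p 0)) - (p 1 * a s 1 * Real.logb 2 (p 1))
        - (p 0 * a s 0 * Real.logb 2 (a s 0) + p 1 * a s 1 * Real.logb 2 (a s 1)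
           - (p 0 * a s 0 + p 1 * a s 1) * Real.logb 2 (p 0 * a s 0 + p 1 * a s 1)))
      = -(∑ s, p 0 * a s 0 * Real.logb 2 (p 0)) - (∑ s, p 1 * a s 1 * Real.logb 2 (p 1))
        - ∑ s, (p 0 * a s 0 * Real.logb 2 (a s 0) + p 1 * a s 1 * Real.logb 2 (a s 1)
           - (p 0 * a s 0 + p 1 * a s 1) * Real.logb 2 (p 0 * a s 0 + p 1 * a s 1)) := by
    rw [← Finset.sum_neg_distrib, ← Finset.sum_sub_distrib, ← Finset.sum_sub_distrib]
  rw [hsplit]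
  have hc0 : ∑ s, p 0 * a s 0 * Real.logb 2 (p 0) = p 0 * Real.logb 2 (p 0) := by
    have : ∀ s, p 0 * a s 0 * Real.logb 2 (p 0) = (p 0 * Real.logb 2 (p 0)) * a s 0 := by
      intro s; ring
    rw [Finset.sum_congr rfl (fun s _ => this s), ← Finset.mul_sum, hasum 0, mul_one]
  have hc1 : ∑ s, p 1 * a s 1 * Real.logb 2 (p 1) = p 1 * Real.logb 2 (p 1) := by
    have : ∀ s, p 1 * a s 1 * Real.logb 2 (p 1) = (p 1 * Real.logb 2 (p 1)) * a s 1 := by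
      intro s; ring
    rw [Finset.sum_congr rfl (fun s _ => this s), ← Finset.mul_sum, hasum 1, mul_one]
  rw [hc0, hc1, Fin.sum_univ_two (fun i => p i * Real.logb 2 (p i))]
  have hgoal : ∀ s, (p 0 * a s 0 * Real.logb 2 (a s 0) + p 1 * a s 1 * Real.logb 2 (a s 1)
      - (p 0 * a s 0 + p 1 * a s 1) * Real.logb 2 (p 0 * a s 0 + p 1 * a s 1))
      ≤ 2*q*(((a s 0 - a s 1)/2)^2 / ((a s 0 + a s 1)/2)) := by
    intro s
    have hp1e : p 1 = 1 - p 0 := by linarith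
    rw [hp1e]
    exact key_scalar_bits (a s 0) (a s 1) (p 0) q (ha s 0) (ha s 1) (hp 0)
      (by linarith [hp 1]) hq0 (by rw [← hp1e]; exact hq1)
  calc -(p 0 * Real.logb 2 (p 0) + p 1 * Real.logb 2 (p 1))
        - (-(p 0 * Real.logb 2 (p 0)) - p 1 * Real.logb 2 (p 1)
          - ∑ s, (p 0 * a s 0 * Real.logb 2 (a s 0) + p 1 * a s 1 * Real.logb 2 (a s 1)
             - (p 0 * a s 0 + p 1 * a s 1) * Real.logb 2 (p 0 * a s 0 + p 1 * a s 1)))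
      = ∑ s, (p 0 * a s 0 * Real.logb 2 (a s 0) + p 1 * a s 1 * Real.logb 2 (a s 1)
             - (p 0 * a s 0 + p 1 * a s 1) * Real.logb 2 (p 0 * a s 0 + p 1 * a s 1)) := by
        ring
    _ ≤ ∑ s, 2*q*(((a s 0 - a s 1)/2)^2 / ((a s 0 + a s 1)/2)) :=
        Finset.sum_le_sum (fun s _ => hgoal s)
    _ = 2*q*∑ s, (((a s 0 - a s 1)/2)^2 / ((a s 0 + a s 1)/2)) := by
        rw [Finset.mul_sum]


/-- Three qubit MUBs, arbitrary priors: with `p₁⁽ᵐ⁾` the larger prior probability of the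
m-th basis, `I₁/(2p₁⁽¹⁾) + I₂/(2p₁⁽²⁾) + I₃/(2p₁⁽³⁾) ≤ 1`. -/
theorem qubit_three_mub_weighted_bound
    {S : Type*} [Fintype S]
    (B₁ B₂ B₃ : Fin 2 → Fin 2 → ℂ)
    (hB₁ : IsONB B₁) (hB₂ : IsONB B₂) (hB₃ : IsONB B₃)
    (h12 : AreMUB B₁ B₂) (h13 : AreMUB B₁ B₃) (h23 : AreMUB B₂ B₃)
    (p₁ p₂ p₃ : Fin 2 → ℝ)
    (hp₁ : ∀ i, 0 ≤ p₁ i) (hp₁sum : ∑ i, p₁ i = 1)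
    (hp₂ : ∀ i, 0 ≤ p₂ i) (hp₂sum : ∑ i, p₂ i = 1)
    (hp₃ : ∀ i, 0 ≤ p₃ i) (hp₃sum : ∑ i, p₃ i = 1)
    (q₁ q₂ q₃ : ℝ)
    (hq₁ : IsGreatest (Set.range p₁) q₁)
    (hq₂ : IsGreatest (Set.range p₂) q₂)
    (hq₃ : IsGreatest (Set.range p₃) q₃)
    (E : S → Matrix (Fin 2) (Fin 2) ℂ) (hE : IsPOVM E) :
    mutInfo B₁ p₁ E / (2 * q₁) + mutInfo B₂ p₂ E / (2 * q₂)
      + mutInfo B₃ p₃ E / (2 * q₃) ≤ 1 := by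

  classical
  obtain ⟨hPSD, hEsum⟩ := hE
  have houtnn : ∀ (s : S) (v : Fin 2 → ℂ), 0 ≤ outProb (E s) v :=
    fun s v => outProb_nonneg (S := S) (E s) (hPSD s) v
  have hone : ∀ (B : Fin 2 → Fin 2 → ℂ), IsONB B → ∀ i, star (B i) ⬝ᵥ B i = 1 := by
    intro B hB i
    have := hB i i
    rwa [if_pos rfl] at this
  have hsum₁ : ∀ i, ∑ s, outProb (E s) (B₁ i) = 1 :=
    fun i => sum_outProb_povm E hEsum (B₁ i) (hone B₁ hB₁ i)
  have hsum₂ : ∀ i, ∑ s, outProb (E s) (B₂ i) = 1 :=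
    fun i => sum_outProb_povm E hEsum (B₂ i) (hone B₂ hB₂ i)
  have hsum₃ : ∀ i, ∑ s, outProb (E s) (B₃ i) = 1 :=
    fun i => sum_outProb_povm E hEsum (B₃ i) (hone B₃ hB₃ i)
  have hq₁0 : p₁ 0 ≤ q₁ := hq₁.2 (Set.mem_range_self 0)
  have hq₁1 : p₁ 1 ≤ q₁ := hq₁.2 (Set.mem_range_self 1)
  have hq₂0 : p₂ 0 ≤ q₂ := hq₂.2 (Set.mem_range_self 0)
  have hq₂1 : p₂ 1 ≤ q₂ := hq₂.2 (Set.mem_range_self 1)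
  have hq₃0 : p₃ 0 ≤ q₃ := hq₃.2 (Set.mem_range_self 0)
  have hq₃1 : p₃ 1 ≤ q₃ := hq₃.2 (Set.mem_range_self 1)
  have hps₁ : p₁ 0 + p₁ 1 = 1 := by rw [← Fin.sum_univ_two p₁]; exact hp₁sum
  have hps₂ : p₂ 0 + p₂ 1 = 1 := by rw [← Fin.sum_univ_two p₂]; exact hp₂sum
  have hps₃ : p₃ 0 + p₃ 1 = 1 := by rw [← Fin.sum_univ_two p₃]; exact hp₃sum
  have h2q₁ : (0:ℝ) < 2*q₁ := by linarith
  have h2q₂ : (0:ℝ) < 2*q₂ := by linarith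
  have h2q₃ : (0:ℝ) < 2*q₃ := by linarith
  have hI₁ := mutInfo_le_sum B₁ p₁ E q₁ hp₁ hp₁sum (fun s i => houtnn s _) hsum₁ hq₁0 hq₁1
  have hI₂ := mutInfo_le_sum B₂ p₂ E q₂ hp₂ hp₂sum (fun s i => houtnn s _) hsum₂ hq₂0 hq₂1
  have hI₃ := mutInfo_le_sum B₃ p₃ E q₃ hp₃ hp₃sum (fun s i => houtnn s _) hsum₃ hq₃0 hq₃1
  set T₁ := ∑ s, (((outProb (E s) (B₁ 0)) - (outProb (E s) (B₁ 1)))/2)^2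
      / (((outProb (E s) (B₁ 0)) + (outProb (E s) (B₁ 1)))/2) with hT₁def
  set T₂ := ∑ s, (((outProb (E s) (B₂ 0)) - (outProb (E s) (B₂ 1)))/2)^2
      / (((outProb (E s) (B₂ 0)) + (outProb (E s) (B₂ 1)))/2) with hT₂def
  set T₃ := ∑ s, (((outProb (E s) (B₃ 0)) - (outProb (E s) (B₃ 1)))/2)^2
      / (((outProb (E s) (B₃ 0)) + (outProb (E s) (B₃ 1)))/2) with hT₃def
  have hper : ∀ s : S,
      ((((outProb (E s) (B₁ 0)) - (outProb (E s) (B₁ 1)))/2)^2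
        / (((outProb (E s) (B₁ 0)) + (outProb (E s) (B₁ 1)))/2))
      + ((((outProb (E s) (B₂ 0)) - (outProb (E s) (B₂ 1)))/2)^2
        / (((outProb (E s) (B₂ 0)) + (outProb (E s) (B₂ 1)))/2))
      + ((((outProb (E s) (B₃ 0)) - (outProb (E s) (B₃ 1)))/2)^2
        / (((outProb (E s) (B₃ 0)) + (outProb (E s) (B₃ 1)))/2))
      ≤ ((outProb (E s) (B₁ 0)) + (outProb (E s) (B₁ 1)))/2 := by
    intro s
    have hseq₁ := sum_outProb_eq hB₁ (E s)
    have hseq₂ := sum_outProb_eq hB₂ (E s)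
    have hseq₃ := sum_outProb_eq hB₃ (E s)
    have hnum := sum_three_sq_le B₁ B₂ B₃ hB₁ hB₂ hB₃ h12 h13 h23 (E s) (hPSD s)
    rcases eq_or_lt_of_le (add_nonneg (houtnn s (B₁ 0)) (houtnn s (B₁ 1))) with h0 | h0
    · have e10 : outProb (E s) (B₁ 0) = 0 := by
        have := houtnn s (B₁ 0); have := houtnn s (B₁ 1); linarith
      have e11 : outProb (E s) (B₁ 1) = 0 := by
        have := houtnn s (B₁ 0); have := houtnn s (B₁ 1); linarith
      have e20 : outProb (E s) (B₂ 0) = 0 := by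
        have := houtnn s (B₂ 0); have := houtnn s (B₂ 1); linarith [hseq₂, hseq₁, e10, e11]
      have e21 : outProb (E s) (B₂ 1) = 0 := by
        have := houtnn s (B₂ 0); have := houtnn s (B₂ 1); linarith [hseq₂, hseq₁, e10, e11]
      have e30 : outProb (E s) (B₃ 0) = 0 := by
        have := houtnn s (B₃ 0); have := houtnn s (B₃ 1); linarith [hseq₃, hseq₁, e10, e11]
      have e31 : outProb (E s) (B₃ 1) = 0 := by
        have := houtnn s (B₃ 0); have := houtnn s (B₃ 1); linarith [hseq₃, hseq₁, e10, e11]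
      rw [e10, e11, e20, e21, e30, e31]
      norm_num
    · rw [hseq₁, hseq₂, hseq₃]
      rw [hseq₁] at h0 hnum
      set t := ((E s) 0 0).re + ((E s) 1 1).re with htdef
      have ht2 : (0:ℝ) < t/2 := by linarith
      rw [← add_div, ← add_div, div_le_iff₀ ht2]
      nlinarith [hnum]
  have hT : T₁ + T₂ + T₃ ≤ 1 := by
    rw [hT₁def, hT₂def, hT₃def, ← Finset.sum_add_distrib, ← Finset.sum_add_distrib]
    calc _ ≤ ∑ s : S, ((outProb (E s) (B₁ 0)) + (outProb (E s) (B₁ 1)))/2 :=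
          Finset.sum_le_sum (fun s _ => hper s)
      _ = 1 := by
          rw [← Finset.sum_div, Finset.sum_add_distrib, hsum₁ 0, hsum₁ 1]
          norm_num
  have e₁ : mutInfo B₁ p₁ E / (2*q₁) ≤ T₁ := by
    rw [div_le_iff₀ h2q₁]; linarith [hI₁]
  have e₂ : mutInfo B₂ p₂ E / (2*q₂) ≤ T₂ := by
    rw [div_le_iff₀ h2q₂]; linarith [hI₂]
  have e₃ : mutInfo B₃ p₃ E / (2*q₃) ≤ T₃ := by
    rw [div_le_iff₀ h2q₃]; linarith [hI₃]
  linarith [e₁, e₂, e₃, hT]
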